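/- The Laurent polynomial γ₂^m γ₃ + γ₄ - 1 in the Laurent polynomial ring ℤ[γ₁^{±1}, γ₂^{±1}, γ₃^{±1}, γ₄^{±1}] is irreducible for every integer m ≥ 0. -/

import Mathlib

abbrev LaurentFour : Type := AddMonoidAlgebra ℤ (Fin 4 →₀ ℤ)

noncomputable def monoFour (x : Fin 4 →₀ ℤ) : LaurentFour := AddMonoidAlgebra.single x 1

namespace LaurentAux

open Finsupp AddMonoidAlgebra

abbrev A4 : Type := Fin 4 →₀ ℤ

def deg (g : A4) : ℤ := g 2

lemma deg_add (x y : A4) : deg (x + y) = deg x + deg y := Finsupp.add_apply x y 2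

/-- homogeneous slice, as an element of the algebra -/
noncomputable def slc (P : A4 → Prop) [DecidablePred P] (p : LaurentFour) : LaurentFour :=
  AddMonoidAlgebra.ofCoeff (Finsupp.filter P p.coeff)

lemma slc_add (P : A4 → Prop) [DecidablePred P] (p q : LaurentFour) :
    slc P (p + q) = slc P p + slc P q := by
  unfold slc; rw [AddMonoidAlgebra.coeff_add, Finsupp.filter_add, AddMonoidAlgebra.ofCoeff_add]

lemma slc_single_of_pos (P : A4 → Prop) [DecidablePred P] {g : A4} (r : ℤ) (h : P g) :
    slc P (AddMonoidAlgebra.single g r) = AddMonoidAlgebra.single g r :=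
  by unfold slc; rw [AddMonoidAlgebra.coeff_single, Finsupp.filter_single_of_pos _ h, AddMonoidAlgebra.ofCoeff_single]

lemma slc_single_of_neg (P : A4 → Prop) [DecidablePred P] {g : A4} (r : ℤ) (h : ¬ P g) :
    slc P (AddMonoidAlgebra.single g r) = 0 :=
  by unfold slc; rw [AddMonoidAlgebra.coeff_single, Finsupp.filter_single_of_neg _ h, AddMonoidAlgebra.ofCoeff_zero]

lemma slc_apply (P : A4 → Prop) [DecidablePred P] (p : LaurentFour) (g : A4) :
    (slc P p).coeff g = if P g then p.coeff g else 0 := rfl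

lemma slc_zero (P : A4 → Prop) [DecidablePred P] : slc P (0 : LaurentFour) = 0 :=
  by unfold slc; rw [AddMonoidAlgebra.coeff_zero, Finsupp.filter_zero, AddMonoidAlgebra.ofCoeff_zero]

/-- sup of `e` over the support of a nonzero element. -/
noncomputable def msup (e : A4 → ℤ) (p : LaurentFour) (hp : p ≠ 0) : ℤ :=
  p.coeff.support.sup' (Finsupp.support_nonempty_iff.2 (mt AddMonoidAlgebra.coeff_eq_zero.1 hp)) e

lemma msup_congr (e : A4 → ℤ) {p q : LaurentFour} (hp : p ≠ 0) (hq : q ≠ 0) (h : p = q) :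
    msup e p hp = msup e q hq := by subst h; rfl

lemma le_msup {e : A4 → ℤ} {p : LaurentFour} (hp : p ≠ 0) {g : A4} (hg : g ∈ p.coeff.support) :
    e g ≤ msup e p hp := Finset.le_sup' e hg

lemma msup_le {e : A4 → ℤ} {p : LaurentFour} (hp : p ≠ 0) {n : ℤ}
    (h : ∀ g ∈ p.coeff.support, e g ≤ n) : msup e p hp ≤ n := Finset.sup'_le _ _ h

lemma exists_msup (e : A4 → ℤ) {p : LaurentFour} (hp : p ≠ 0) :
    ∃ g ∈ p.coeff.support, e g = msup e p hp := by
  obtain ⟨g, hg, h⟩ := Finset.exists_mem_eq_sup' (Finsupp.support_nonempty_iff.2 (mt AddMonoidAlgebra.coeff_eq_zero.1 hp)) e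
  exact ⟨g, hg, h.symm⟩

lemma msup_mul {e : A4 → ℤ} (he : ∀ x y, e (x + y) = e x + e y) {p q : LaurentFour}
    (hp : p ≠ 0) (hq : q ≠ 0) :
    msup e (p * q) (mul_ne_zero hp hq) = msup e p hp + msup e q hq := by
  classical
  set Mp := msup e p hp with hMp
  set Mq := msup e q hq with hMq
  apply le_antisymm
  · apply msup_le
    intro c hc
    have := AddMonoidAlgebra.support_coeff_mul_subset p q hc
    rw [Finset.mem_add] at this
    obtain ⟨x, hx, y, hy, rfl⟩ := this
    have h1 : e x ≤ Mp := le_msup hp hx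
    have h2 : e y ≤ Mq := le_msup hq hy
    rw [he]; omega
  · set Sp := p.coeff.support.filter (fun g => e g = Mp) with hSp
    set Sq := q.coeff.support.filter (fun g => e g = Mq) with hSq
    have hSpne : Sp.Nonempty := by
      obtain ⟨g, hg, h⟩ := exists_msup e hp
      exact ⟨g, Finset.mem_filter.2 ⟨hg, h⟩⟩
    have hSqne : Sq.Nonempty := by
      obtain ⟨g, hg, h⟩ := exists_msup e hq
      exact ⟨g, Finset.mem_filter.2 ⟨hg, h⟩⟩
    obtain ⟨a0, ha0, b0, hb0, hu⟩ := UniqueSums.uniqueAdd_of_nonempty hSpne hSqne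
    obtain ⟨ha0s, ha0e⟩ := Finset.mem_filter.1 ha0
    obtain ⟨hb0s, hb0e⟩ := Finset.mem_filter.1 hb0
    have hua : UniqueAdd p.coeff.support q.coeff.support a0 b0 := by
      intro a b ha hb hab
      have h1 : e a ≤ Mp := le_msup hp ha
      have h2 : e b ≤ Mq := le_msup hq hb
      have h3 : e a + e b = Mp + Mq := by
        have := congrArg e hab
        rw [he, he, ha0e, hb0e] at this
        exact this
      have h4 : e a = Mp := by omega
      have h5 : e b = Mq := by omega
      exact hu (Finset.mem_filter.2 ⟨ha, h4⟩) (Finset.mem_filter.2 ⟨hb, h5⟩) hab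
    have happ : (p * q).coeff (a0 + b0) = p.coeff a0 * q.coeff b0 :=
      AddMonoidAlgebra.coeff_mul_add_of_uniqueAdd hua
    have hne : (p * q).coeff (a0 + b0) ≠ 0 := by
      rw [happ]
      exact mul_ne_zero (Finsupp.mem_support_iff.1 ha0s) (Finsupp.mem_support_iff.1 hb0s)
    have hmem : a0 + b0 ∈ (p * q).coeff.support := Finsupp.mem_support_iff.2 hne
    have hfin := le_msup (e := e) (mul_ne_zero hp hq) hmem
    rw [he, ha0e, hb0e] at hfin
    exact hfin

lemma msup_nonneg {p : LaurentFour} (hp : p ≠ 0) :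
    0 ≤ msup deg p hp + msup (fun g => -deg g) p hp := by
  obtain ⟨c, hc⟩ := Finsupp.support_nonempty_iff.2 (mt AddMonoidAlgebra.coeff_eq_zero.1 hp)
  have h1 : deg c ≤ msup deg p hp := le_msup hp hc
  have h2 : -deg c ≤ msup (fun g => -deg g) p hp := le_msup hp hc
  omega

lemma neg_deg_add (x y : A4) : -deg (x + y) = -deg x + -deg y := by
  rw [deg_add]; ring

/-- slice of a product with a single. -/
lemma mul_single_slc (P : A4 → Prop) [DecidablePred P] (p : LaurentFour) (h : A4) (s : ℤ) :
    slc P (p * AddMonoidAlgebra.single h s)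
      = slc (fun g => P (g + h)) p * AddMonoidAlgebra.single h s := by
  induction p using AddMonoidAlgebra.induction_linear with
  | zero => rw [zero_mul, slc_zero, slc_zero, zero_mul]
  | add f g hf hg =>
      rw [add_mul, slc_add, hf, hg, slc_add, add_mul]
  | single g r =>
      rw [AddMonoidAlgebra.single_mul_single]
      by_cases hP : P (g + h)
      · rw [slc_single_of_pos P _ hP, slc_single_of_pos (fun g => P (g + h)) r hP,
          AddMonoidAlgebra.single_mul_single]
      · rw [slc_single_of_neg P _ hP, slc_single_of_neg (fun g => P (g + h)) r hP, zero_mul]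

/-- top-slice extraction for a homogeneous left factor. -/
lemma slc_mul_homog {p : LaurentFour} {k : ℤ} (hp : ∀ g ∈ p.coeff.support, deg g = k)
    (q : LaurentFour) (n : ℤ) :
    slc (fun g => deg g = n) (p * q) = p * slc (fun h => deg h = n - k) q := by
  induction q using AddMonoidAlgebra.induction_linear with
  | zero => rw [mul_zero, slc_zero, slc_zero, mul_zero]
  | add f g hf hg =>
      rw [mul_add, slc_add, hf, hg, slc_add, mul_add]
  | single h s =>
      rw [mul_single_slc]
      by_cases hh : deg h = n - k
      · rw [slc_single_of_pos (fun h => deg h = n - k) s hh]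
        congr 1
        ext g
        rw [slc_apply]
        by_cases hg : g ∈ p.coeff.support
        · have hgk := hp g hg
          rw [if_pos (by rw [deg_add]; omega)]
        · rw [Finsupp.notMem_support_iff.1 hg]
          split <;> rfl
      · rw [slc_single_of_neg (fun h => deg h = n - k) s hh, mul_zero]
        have hz : slc (fun g => deg (g + h) = n) p = 0 := by
          ext g
          rw [slc_apply]
          by_cases hg : g ∈ p.coeff.support
          · have hgk := hp g hg
            rw [if_neg (by rw [deg_add]; omega)]
            rfl
          · rw [Finsupp.notMem_support_iff.1 hg]
            split <;> rfl
        rw [hz, zero_mul]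

end LaurentAux

open LaurentAux Finsupp AddMonoidAlgebra in
theorem laurent_irreducible (m : ℕ) :
    Irreducible (monoFour (Finsupp.single 1 (m : ℤ) + Finsupp.single 2 1)
      + monoFour (Finsupp.single 3 1) - 1) := by
  set a : A4 := Finsupp.single 1 (m : ℤ) + Finsupp.single 2 1 with ha
  set b : A4 := Finsupp.single 3 1 with hb
  set f : LaurentFour := monoFour a + monoFour b - 1 with hf
  have hdega : deg a = 1 := by simp [deg, ha, Finsupp.single_apply]
  have hdegb : deg b = 0 := by simp [deg, hb, Finsupp.single_apply]
  have hdeg0 : deg (0 : A4) = 0 := by simp [deg]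
  have hab : a ≠ b := by
    intro h
    have : (1 : ℤ) = 0 := by rw [← hdega, h, hdegb]
    exact one_ne_zero this
  have ha0 : a ≠ 0 := by
    intro h
    have : (1 : ℤ) = 0 := by rw [← hdega, h, hdeg0]
    exact one_ne_zero this
  have hb0 : b ≠ 0 := by
    intro h
    have := Finsupp.single_eq_zero.1 (hb ▸ h)
    exact one_ne_zero this
  have hfexp : f = AddMonoidAlgebra.single a 1
      + (AddMonoidAlgebra.single b 1 + AddMonoidAlgebra.single (0 : A4) (-1 : ℤ)) := by
    rw [hf, monoFour, monoFour, AddMonoidAlgebra.one_def]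
    rw [sub_eq_add_neg, add_assoc]
    congr 1
    congr 1
    exact (AddMonoidAlgebra.single_neg (0 : A4) (1 : ℤ)).symm
  have hsupp : f.coeff.support = {a, b, 0} := by
    rw [hfexp, AddMonoidAlgebra.coeff_add, AddMonoidAlgebra.coeff_add, AddMonoidAlgebra.coeff_single,
      AddMonoidAlgebra.coeff_single, AddMonoidAlgebra.coeff_single]
    rw [Finsupp.support_add_eq, Finsupp.support_add_eq]
    · rw [Finsupp.support_single_ne_zero _ one_ne_zero,
        Finsupp.support_single_ne_zero _ one_ne_zero,
        Finsupp.support_single_ne_zero _ (by norm_num : (-1 : ℤ) ≠ 0)]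
      simp only [Finset.insert_eq, Finset.union_assoc]
    · rw [Finsupp.support_single_ne_zero _ one_ne_zero,
        Finsupp.support_single_ne_zero _ (by norm_num : (-1 : ℤ) ≠ 0)]
      exact Finset.disjoint_singleton.2 hb0
    · rw [Finsupp.support_single_ne_zero _ one_ne_zero, Finsupp.support_add_eq]
      · rw [Finsupp.support_single_ne_zero _ one_ne_zero,
          Finsupp.support_single_ne_zero _ (by norm_num : (-1 : ℤ) ≠ 0)]
        exact Finset.disjoint_union_right.2
          ⟨Finset.disjoint_singleton.2 hab, Finset.disjoint_singleton.2 ha0⟩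
      · rw [Finsupp.support_single_ne_zero _ one_ne_zero,
          Finsupp.support_single_ne_zero _ (by norm_num : (-1 : ℤ) ≠ 0)]
        exact Finset.disjoint_singleton.2 hb0
  have hfne : f ≠ 0 := by
    rw [ne_eq, ← AddMonoidAlgebra.coeff_eq_zero, ← ne_eq, ← Finsupp.support_nonempty_iff, hsupp]
    exact ⟨a, by simp⟩
  have hdegmem : ∀ g ∈ f.coeff.support, deg g = 1 ∨ deg g = 0 := by
    intro g hg
    rw [hsupp] at hg
    simp only [Finset.mem_insert, Finset.mem_singleton] at hg
    rcases hg with rfl | rfl | rfl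
    · left; exact hdega
    · right; exact hdegb
    · right; exact hdeg0
  have hamem : a ∈ f.coeff.support := by rw [hsupp]; simp
  have hbmem : b ∈ f.coeff.support := by rw [hsupp]; simp
  have hsupf : msup deg f hfne = 1 := by
    apply le_antisymm
    · exact msup_le hfne (fun g hg => by rcases hdegmem g hg with h | h <;> omega)
    · have := le_msup (e := deg) hfne hamem
      omega
  have hinff : msup (fun g => -deg g) f hfne = 0 := by
    apply le_antisymm
    · exact msup_le hfne (fun g hg => by rcases hdegmem g hg with h | h <;> simp [h])
    · have := le_msup (e := fun g => -deg g) hfne hbmem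
      simp only [hdegb, neg_zero] at this
      omega
  have hslc : slc (fun g => deg g = 1) f = AddMonoidAlgebra.single a 1 := by
    rw [hfexp, slc_add, slc_add,
      slc_single_of_pos _ _ hdega,
      slc_single_of_neg _ _ (by rw [hdegb]; omega),
      slc_single_of_neg _ _ (by rw [hdeg0]; omega)]
    simp
  have hunit_mono : ∀ x : A4, IsUnit (AddMonoidAlgebra.single x (1 : ℤ) : LaurentFour) := by
    intro x
    apply IsUnit.of_mul_eq_one (AddMonoidAlgebra.single (-x) 1)
    rw [AddMonoidAlgebra.single_mul_single, add_neg_cancel, mul_one, AddMonoidAlgebra.one_def]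
  have key : ∀ p q : LaurentFour, ∀ hp : p ≠ 0, q ≠ 0 → p * q = f →
      msup deg p hp + msup (fun g => -deg g) p hp = 0 → IsUnit p := by
    intro p q hp hq hpq hS
    set k := msup deg p hp with hk
    have hhom : ∀ g ∈ p.coeff.support, deg g = k := by
      intro g hg
      have h1 := le_msup (e := deg) hp hg
      have h2 := le_msup (e := fun g => -deg g) hp hg
      omega
    have hsl := slc_mul_homog hhom q 1
    rw [hpq, hslc] at hsl
    exact isUnit_of_dvd_unit ⟨_, hsl⟩ (hunit_mono a)
  constructor
  · intro hu
    obtain ⟨g, hg⟩ := hu.exists_right_inv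
    have hg0 : g ≠ 0 := by
      intro h; rw [h, mul_zero] at hg; exact zero_ne_one hg
    have hone : (1 : LaurentFour) ≠ 0 := one_ne_zero
    have h1 : msup deg 1 hone = 1 + msup deg g hg0 := by
      rw [← msup_congr deg (mul_ne_zero hfne hg0) hone hg, msup_mul deg_add hfne hg0, hsupf]
    have h2 : msup (fun g => -deg g) 1 hone = 0 + msup (fun g => -deg g) g hg0 := by
      rw [← msup_congr _ (mul_ne_zero hfne hg0) hone hg, msup_mul neg_deg_add hfne hg0, hinff]
    have hsupp1 : (1 : LaurentFour).coeff.support = {0} := by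
      rw [AddMonoidAlgebra.one_def]
      exact Finsupp.support_single_ne_zero _ one_ne_zero
    have h0mem : (0 : A4) ∈ (1 : LaurentFour).coeff.support := by rw [hsupp1]; simp
    have h3 : msup deg 1 hone = 0 := by
      apply le_antisymm
      · apply msup_le
        intro c hc
        rw [hsupp1, Finset.mem_singleton] at hc
        subst hc; omega
      · have := le_msup (e := deg) hone h0mem
        omega
    have h4 : msup (fun g => -deg g) 1 hone = 0 := by
      apply le_antisymm
      · apply msup_le
        intro c hc
        rw [hsupp1, Finset.mem_singleton] at hc
        subst hc; simp [hdeg0]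
      · have := le_msup (e := fun g => -deg g) hone h0mem
        simp only [hdeg0, neg_zero] at this
        omega
    have h5 := msup_nonneg hg0
    rw [h3] at h1
    rw [h4] at h2
    omega
  · intro p q hpq
    have hp : p ≠ 0 := by rintro rfl; rw [zero_mul] at hpq; exact hfne hpq
    have hq : q ≠ 0 := by rintro rfl; rw [mul_zero] at hpq; exact hfne hpq
    have e1 : msup deg p hp + msup deg q hq = 1 := by
      rw [← msup_mul deg_add hp hq, msup_congr deg (mul_ne_zero hp hq) hfne hpq.symm, hsupf]
    have e2 : msup (fun g => -deg g) p hp + msup (fun g => -deg g) q hq = 0 := by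
      rw [← msup_mul neg_deg_add hp hq,
        msup_congr _ (mul_ne_zero hp hq) hfne hpq.symm, hinff]
    have n1 := msup_nonneg hp
    have n2 := msup_nonneg hq
    have hcase : msup deg p hp + msup (fun g => -deg g) p hp = 0
        ∨ msup deg q hq + msup (fun g => -deg g) q hq = 0 := by omega
    rcases hcase with h | h
    · exact Or.inl (key p q hp hq hpq.symm h)
    · refine Or.inr (key q p hq hp ?_ h)
      rw [mul_comm]; exact hpq.symm
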